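/- Let K be a field and let a₁,…,a_s ∈ ℕⁿ. The kernel of the K-algebra homomorphism φ: K[y₁,…,y_s] → K[x₁,…,xₙ] with φ(yᵢ) = x^{aᵢ} is generated as an ideal by the binomials y^u − y^v, taken over all pairs u, v ∈ ℕ^s with Σ uᵢ aᵢ = Σ vᵢ aᵢ. -/

import Mathlib

open MvPolynomial

private noncomputable def wt {n s : ℕ} (a : Fin s → (Fin n →₀ ℕ)) (u : Fin s →₀ ℕ) :
    Fin n →₀ ℕ :=
  u.sum fun i m => m • a i

private lemma wt_add {n s : ℕ} (a : Fin s → (Fin n →₀ ℕ)) (u v : Fin s →₀ ℕ) :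
    wt a (u + v) = wt a u + wt a v := by
  unfold wt
  rw [Finsupp.sum_add_index (by simp) (by intros; rw [add_smul])]

private lemma prod_pow_eq {K : Type*} [Field K] {n s : ℕ} (a : Fin s → (Fin n →₀ ℕ))
    (u : Fin s →₀ ℕ) :
    (u.prod fun i k => (monomial (a i) (1 : K)) ^ k) = monomial (wt a u) 1 := by
  induction u using Finsupp.induction with
  | zero => simp [wt]
  | single_add i m u hi hm ih =>
    rw [Finsupp.prod_add_index (by simp) (by intros; rw [pow_add]), ih,
      Finsupp.prod_single_index (by simp), wt_add]
    unfold wt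
    rw [Finsupp.sum_single_index (by simp), monomial_pow, one_pow, monomial_mul, one_mul]

private lemma aeval_monomial_eq {K : Type*} [Field K] {n s : ℕ} (a : Fin s → (Fin n →₀ ℕ))
    (u : Fin s →₀ ℕ) (c : K) :
    aeval (fun i : Fin s => (monomial (a i) (1 : K) : MvPolynomial (Fin n) K)) (monomial u c)
      = monomial (wt a u) c := by
  rw [aeval_monomial, prod_pow_eq, algebraMap_eq, C_mul_monomial, mul_one]

private lemma coeff_aeval {K : Type*} [Field K] {n s : ℕ} (a : Fin s → (Fin n →₀ ℕ))
    (p : MvPolynomial (Fin s) K) (d : Fin n →₀ ℕ) :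
    coeff d (aeval (fun i : Fin s => (monomial (a i) (1 : K) : MvPolynomial (Fin n) K)) p)
      = ∑ u ∈ p.support.filter (fun u => wt a u = d), coeff u p := by
  conv_lhs => rw [p.as_sum, map_sum]
  rw [coeff_sum]
  simp only [aeval_monomial_eq, coeff_monomial]
  rw [Finset.sum_filter]

private lemma ker_subset_span {K : Type*} [Field K] {n s : ℕ} (a : Fin s → (Fin n →₀ ℕ)) :
    ∀ (N : ℕ) (p : MvPolynomial (Fin s) K), p.support.card ≤ N →
      aeval (fun i : Fin s => (monomial (a i) (1 : K) : MvPolynomial (Fin n) K)) p = 0 →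
      p ∈ Ideal.span { p : MvPolynomial (Fin s) K |
          ∃ u v : Fin s →₀ ℕ, wt a u = wt a v ∧
            p = monomial u (1 : K) - monomial v (1 : K) } := by
  intro N
  induction N with
  | zero =>
    intro p hp _
    have : p.support = ∅ := Finset.card_eq_zero.mp (Nat.le_zero.mp hp)
    rw [support_eq_empty.mp this]
    exact Ideal.zero_mem _
  | succ N ih =>
    intro p hp hker
    by_cases h0 : p = 0
    · rw [h0]; exact Ideal.zero_mem _
    obtain ⟨u, hu⟩ := (support_nonempty.mpr h0)
    have hc : coeff u p ≠ 0 := mem_support_iff.mp hu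
    set c := coeff u p with hcdef
    have hsum : ∑ v ∈ p.support.filter (fun v => wt a v = wt a u), coeff v p = 0 := by
      rw [← coeff_aeval, hker, coeff_zero]
    have huf : u ∈ p.support.filter (fun v => wt a v = wt a u) :=
      Finset.mem_filter.mpr ⟨hu, rfl⟩
    have hex : ∃ v ∈ p.support.filter (fun v => wt a v = wt a u), v ≠ u := by
      by_contra h
      push_neg at h
      have : p.support.filter (fun v => wt a v = wt a u) = {u} :=
        Finset.eq_singleton_iff_unique_mem.mpr ⟨huf, h⟩
      rw [this, Finset.sum_singleton] at hsum
      exact hc hsum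
    obtain ⟨v, hvf, hvu⟩ := hex
    have hwv : wt a v = wt a u := (Finset.mem_filter.mp hvf).2
    have hvs : v ∈ p.support := (Finset.mem_filter.mp hvf).1
    set b : MvPolynomial (Fin s) K := C c * (monomial u 1 - monomial v 1) with hb
    have hbS : b ∈ Ideal.span { p : MvPolynomial (Fin s) K |
          ∃ u v : Fin s →₀ ℕ, wt a u = wt a v ∧
            p = monomial u (1 : K) - monomial v (1 : K) } :=
      Ideal.mul_mem_left _ _ (Ideal.subset_span ⟨u, v, hwv.symm, rfl⟩)
    have hcoeffb : ∀ w, coeff w b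
        = c * ((if u = w then (1:K) else 0) - (if v = w then (1:K) else 0)) := by
      intro w
      rw [hb, coeff_C_mul, coeff_sub, coeff_monomial, coeff_monomial]
    have hsupp : (p - b).support ⊆ p.support.erase u := by
      intro w hw
      have hw' : coeff w (p - b) ≠ 0 := mem_support_iff.mp hw
      rw [coeff_sub, hcoeffb] at hw'
      rcases eq_or_ne w u with rfl | hwu
      · exfalso
        apply hw'
        rw [if_pos rfl, if_neg hvu, ← hcdef]
        ring
      · refine Finset.mem_erase.mpr ⟨hwu, mem_support_iff.mpr ?_⟩
        intro hcw
        apply hw'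
        rw [hcw, if_neg (Ne.symm hwu)]
        rcases eq_or_ne v w with rfl | hvw
        · exact absurd hcw (mem_support_iff.mp hvs)
        · rw [if_neg hvw]; ring
    have hcard : (p - b).support.card ≤ N := by
      calc (p - b).support.card ≤ (p.support.erase u).card := Finset.card_le_card hsupp
        _ = p.support.card - 1 := Finset.card_erase_of_mem hu
        _ ≤ N := by omega
    have hkerb : aeval (fun i : Fin s => (monomial (a i) (1 : K) : MvPolynomial (Fin n) K))
        (p - b) = 0 := by
      rw [map_sub, hker, hb, map_mul, map_sub, aeval_monomial_eq, aeval_monomial_eq, hwv,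
        sub_self, mul_zero, sub_zero]
    have := ih (p - b) hcard hkerb
    have : p = (p - b) + b := by ring
    rw [this]
    exact Ideal.add_mem _ (ih (p - b) hcard hkerb) hbS

theorem toric_ideal_generated_by_binomials {K : Type*} [Field K] {n s : ℕ}
    (a : Fin s → (Fin n →₀ ℕ)) :
    RingHom.ker (MvPolynomial.aeval
        (fun i : Fin s => (MvPolynomial.monomial (a i) (1 : K) : MvPolynomial (Fin n) K))
        : MvPolynomial (Fin s) K →ₐ[K] MvPolynomial (Fin n) K).toRingHom
      = Ideal.span { p : MvPolynomial (Fin s) K |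
          ∃ u v : Fin s →₀ ℕ,
            (u.sum fun i m => m • a i) = (v.sum fun i m => m • a i) ∧
            p = MvPolynomial.monomial u (1 : K) - MvPolynomial.monomial v (1 : K) } := by
  have hset : { p : MvPolynomial (Fin s) K |
          ∃ u v : Fin s →₀ ℕ,
            (u.sum fun i m => m • a i) = (v.sum fun i m => m • a i) ∧
            p = MvPolynomial.monomial u (1 : K) - MvPolynomial.monomial v (1 : K) }
      = { p : MvPolynomial (Fin s) K |
          ∃ u v : Fin s →₀ ℕ, wt a u = wt a v ∧
            p = monomial u (1 : K) - monomial v (1 : K) } := rfl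
  rw [hset]
  apply le_antisymm
  · intro p hp
    exact ker_subset_span a p.support.card p le_rfl (RingHom.mem_ker.mp hp)
  · rw [Ideal.span_le]
    rintro q ⟨u, v, huv, rfl⟩
    rw [SetLike.mem_coe, RingHom.mem_ker]
    show aeval _ (monomial u (1:K) - monomial v 1) = 0
    rw [map_sub, aeval_monomial_eq, aeval_monomial_eq, huv, sub_self]
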